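/- arXiv:2401.17090 — 2 statements merged into one kernel-verified Lean document; each statement's English description precedes it below -/
import Mathlib

section
/- If f₀ ∈ L²[0,1] is not constant (almost everywhere) and MCA(f₀) = 1/2, then E[A(f₀), f₀] > 0, where A is the constrained selection gradient; equivalently ‖x−1/2‖²·‖∇E(f₀)‖² > ⟨x − 1/2, ∇E(f₀)⟩² (strict Cauchy–Schwarz), since ∇E(f₀) is not a scalar multiple of 1/2 − x unless f₀ is constant. -/
open MeasureTheory intervalIntegral ENNReal
open Set Metric Filter Topology

/-- The selection gradient `∇E(f)(x) = ∫₀ˣ f − ∫ₓ¹ f`. -/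
noncomputable def gradE (f : ℝ → ℝ) (x : ℝ) : ℝ :=
  (∫ y in (0:ℝ)..x, f y) - ∫ y in x..(1:ℝ), f y

/-- The Heaviside function: `1` for `t ≥ 0`, `0` for `t < 0`. -/
noncomputable def heav (t : ℝ) : ℝ := if 0 ≤ t then 1 else 0

/-- The MCA-constraint functional `w(f) = ∫₀¹ (x − 1/2) f(x) dx`. -/
noncomputable def wfun (f : ℝ → ℝ) : ℝ := ∫ x in (0:ℝ)..1, (x - 1/2) * f x

/-- The mean competitive ability. -/
noncomputable def mca (f : ℝ → ℝ) : ℝ :=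
  (∫ x in (0:ℝ)..1, x * f x) / (∫ x in (0:ℝ)..1, f x)

/-- The constrained selection gradient `A`. -/
noncomputable def Aop (f : ℝ → ℝ) (x : ℝ) : ℝ :=
  gradE f x - 12 * heav (wfun f) * (x - 1/2) *
    ∫ y in (0:ℝ)..1, (y - 1/2) * gradE f y

/-- The payoff of the function-valued team game. -/
noncomputable def payoff (f g : ℝ → ℝ) : ℝ :=
  ∫ x in (0:ℝ)..1, f x * gradE g x

lemma ae_const_of_primitive (f : ℝ → ℝ) (hfi : IntegrableOn f (Set.Icc (0:ℝ) 1)) (C : ℝ)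
    (hF : ∀ b ∈ Set.Icc (0:ℝ) 1, (∫ y in (0:ℝ)..b, f y) = C * b) :
    f =ᵐ[volume.restrict (Set.Icc (0:ℝ) 1)] fun _ => C := by
  set w : ℝ → ℝ := (Set.Icc (0:ℝ) 1).indicator (fun x => f x - C) with hw
  have hfCi : IntegrableOn (fun x => f x - C) (Set.Icc (0:ℝ) 1) := hfi.sub (integrableOn_const (by simp))
  have hw_int : Integrable w := (integrable_indicator_iff measurableSet_Icc).2 hfCi
  have H := IsUnifLocDoublingMeasure.ae_tendsto_average (μ := (volume : Measure ℝ))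
    hw_int.locallyIntegrable 1
  have key : ∀ᵐ x ∂(volume : Measure ℝ), x ∈ Set.Ioo (0:ℝ) 1 → f x = C := by
    filter_upwards [H] with x hx hxI
    set ε := min x (1 - x) with hεdef
    have hε0 : 0 < ε := lt_min hxI.1 (by linarith [hxI.2])
    set δ : ℕ → ℝ := fun n => ε / (n + 1) with hδdef
    have hδ0 : ∀ n, 0 < δ n := fun n => by positivity
    have hδε : ∀ n, δ n ≤ ε := fun n => by
      rw [hδdef]
      exact div_le_self hε0.le (by exact_mod_cast le_add_of_nonneg_left (Nat.cast_nonneg n))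
    have hδlim : Tendsto δ atTop (𝓝[>] 0) := by
      refine tendsto_nhdsWithin_of_tendsto_nhds_of_eventually_within _ ?_
        (Eventually.of_forall fun n => hδ0 n)
      have h1 : Tendsto (fun n : ℕ => ε / ((n:ℝ) + 1)) atTop (𝓝 0) := by
        have h2 := (tendsto_const_div_atTop_nhds_zero_nat ε).comp (tendsto_add_atTop_nat 1)
        simp only [Function.comp_def] at h2
        push_cast at h2
        exact h2
      simpa [hδdef] using h1
    have hT := hx (fun _ => x) δ hδlim (Eventually.of_forall fun j =>
      mem_closedBall_self (by nlinarith [hδ0 j]))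
    have havg : ∀ j, (⨍ y in closedBall x (δ j), w y) = 0 := by
      intro j
      have hsub : closedBall x (δ j) ⊆ Set.Icc (0:ℝ) 1 := by
        rw [Real.closedBall_eq_Icc]
        intro y hy
        have h1 : δ j ≤ x := le_trans (hδε j) (min_le_left _ _)
        have h2 : δ j ≤ 1 - x := le_trans (hδε j) (min_le_right _ _)
        exact ⟨by linarith [hy.1], by linarith [hy.2]⟩
      have hizero : (∫ y in closedBall x (δ j), w y) = 0 := by
        rw [Real.closedBall_eq_Icc]
        have heq : ∀ y ∈ Set.Icc (x - δ j) (x + δ j), w y = f y - C := fun y hy =>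
          Set.indicator_of_mem (hsub (by rwa [Real.closedBall_eq_Icc])) _
        rw [setIntegral_congr_fun measurableSet_Icc heq]
        have hle : x - δ j ≤ x + δ j := by linarith [(hδ0 j).le]
        have hIccsub : Set.Icc (x - δ j) (x + δ j) ⊆ Set.Icc (0:ℝ) 1 := by
          rw [← Real.closedBall_eq_Icc]; exact hsub
        have hfint : IntervalIntegrable f volume (x - δ j) (x + δ j) :=
          (hfi.mono_set (by rwa [Set.uIcc_of_le hle])).intervalIntegrable
        have hfint0 : ∀ b ∈ Set.Icc (0:ℝ) 1, IntervalIntegrable f volume 0 b := fun b hb =>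
          (hfi.mono_set (by rw [Set.uIcc_of_le hb.1]; exact Set.Icc_subset_Icc_right hb.2)).intervalIntegrable
        have hmem1 : x - δ j ∈ Set.Icc (0:ℝ) 1 := hIccsub (by constructor <;> linarith)
        have hmem2 : x + δ j ∈ Set.Icc (0:ℝ) 1 := hIccsub (by constructor <;> linarith)
        have hsplit : (∫ y in (x - δ j)..(x + δ j), f y)
            = (∫ y in (0:ℝ)..(x + δ j), f y) - ∫ y in (0:ℝ)..(x - δ j), f y :=
          (intervalIntegral.integral_interval_sub_left (hfint0 _ hmem2) (hfint0 _ hmem1)).symm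
        rw [← setIntegral_congr_set Ioc_ae_eq_Icc, ← intervalIntegral.integral_of_le hle,
          intervalIntegral.integral_sub hfint intervalIntegrable_const, hsplit,
          hF _ hmem2, hF _ hmem1, intervalIntegral.integral_const]
        rw [smul_eq_mul]; ring
      rw [setAverage_eq, hizero]
      simp
    have : Tendsto (fun _ : ℕ => (0:ℝ)) atTop (𝓝 (w x)) := by
      simpa [havg] using hT
    have hwx : w x = 0 := tendsto_nhds_unique this tendsto_const_nhds
    have : w x = f x - C := Set.indicator_of_mem (Set.Ioo_subset_Icc_self hxI) _
    linarith [this ▸ hwx]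
  have : f =ᵐ[volume.restrict (Set.Ioo (0:ℝ) 1)] fun _ => C :=
    (ae_restrict_iff' measurableSet_Ioo).2 key
  rwa [Measure.restrict_congr_set Ioo_ae_eq_Icc] at this

/-- For nonconstant `f₀ ∈ L²[0,1]` with `MCA(f₀) = 1/2`, the constrained
selection gradient strictly improves the payoff: `E[A(f₀), f₀] > 0`,
equivalently the Cauchy–Schwarz inequality between `x − 1/2` and `∇E(f₀)`
is strict. -/
theorem stmt14 (f₀ : ℝ → ℝ)
    (hf : MemLp f₀ 2 (volume.restrict (Set.Icc (0:ℝ) 1)))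
    (hint : (∫ x in (0:ℝ)..1, f₀ x) ≠ 0)
    (hmca : mca f₀ = 1/2)
    (hnc : ¬ ∃ c : ℝ, f₀ =ᵐ[volume.restrict (Set.Icc (0:ℝ) 1)] (fun _ => c)) :
    0 < payoff (Aop f₀) f₀ ∧
    (∫ x in (0:ℝ)..1, (x - 1/2) * gradE f₀ x)^2
      < (∫ x in (0:ℝ)..1, (x - 1/2)^2) * ∫ x in (0:ℝ)..1, (gradE f₀ x)^2 := by
  have hfin : IsFiniteMeasure (volume.restrict (Set.Icc (0:ℝ) 1)) := by
    constructor
    rw [Measure.restrict_apply_univ]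
    simp [Real.volume_Icc]
  have hfi : IntegrableOn f₀ (Set.Icc (0:ℝ) 1) volume := hf.integrable (by norm_num)
  -- interval integrability on subintervals of [0,1]
  have hII : ∀ a ∈ Set.Icc (0:ℝ) 1, ∀ b ∈ Set.Icc (0:ℝ) 1,
      IntervalIntegrable f₀ volume a b := fun a ha b hb =>
    (hfi.mono_set (Set.uIcc_subset_Icc ha hb)).intervalIntegrable
  have h01 : (0:ℝ) ∈ Set.Icc (0:ℝ) 1 := by norm_num
  have h11 : (1:ℝ) ∈ Set.Icc (0:ℝ) 1 := by norm_num
  set S : ℝ := ∫ x in (0:ℝ)..1, f₀ x with hS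
  set F : ℝ → ℝ := fun b => ∫ y in (0:ℝ)..b, f₀ y with hFdef
  have hFc : ContinuousOn F (Set.Icc (0:ℝ) 1) := by
    have := continuousOn_primitive_interval (a := (0:ℝ)) (b := 1) (μ := volume)
      (f := f₀) (by rwa [Set.uIcc_of_le (by norm_num : (0:ℝ) ≤ 1)])
    rwa [Set.uIcc_of_le (by norm_num : (0:ℝ) ≤ 1)] at this
  have hgrad : ∀ x ∈ Set.Icc (0:ℝ) 1, gradE f₀ x = 2 * F x - S := by
    intro x hx
    have hadd : (∫ y in (0:ℝ)..x, f₀ y) + (∫ y in x..(1:ℝ), f₀ y) = S :=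
      intervalIntegral.integral_add_adjacent_intervals (hII 0 h01 x hx) (hII x hx 1 h11)
    unfold gradE
    rw [hFdef]
    simp only
    linarith [hadd]
  have hgc : ContinuousOn (gradE f₀) (Set.Icc (0:ℝ) 1) := by
    have h2 : ContinuousOn (fun x => 2 * F x - S) (Set.Icc (0:ℝ) 1) :=
      (continuousOn_const.mul hFc).sub continuousOn_const
    exact h2.congr hgrad
  have hgint : IntervalIntegrable (gradE f₀) volume 0 1 :=
    hgc.intervalIntegrable_of_Icc (by norm_num)
  set c : ℝ := ∫ y in (0:ℝ)..1, (y - 1/2) * gradE f₀ y with hc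
  set G : ℝ := ∫ x in (0:ℝ)..1, (gradE f₀ x)^2 with hG
  -- wfun f₀ = 0
  have hxfint : IntervalIntegrable (fun x => x * f₀ x) volume 0 1 :=
    (hII 0 h01 1 h11).continuousOn_mul continuous_id.continuousOn
  have hxf : (∫ x in (0:ℝ)..1, x * f₀ x) = (1/2) * S := by
    have := hmca
    unfold mca at this
    rw [← hS] at this
    field_simp at this
    linarith [this]
  have hw0 : wfun f₀ = 0 := by
    unfold wfun
    have heqf : (fun x => (x - 1/2) * f₀ x) = fun x => x * f₀ x - (1/2) * f₀ x := by
      funext x; ring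
    rw [heqf, intervalIntegral.integral_sub hxfint
      ((hII 0 h01 1 h11).const_mul _), intervalIntegral.integral_const_mul, hxf, ← hS]
    ring
  have hheav : heav (wfun f₀) = 1 := by rw [hw0]; simp [heav]
  -- continuity-based integrability
  have huc : ContinuousOn (fun x : ℝ => (x - 1/2) * gradE f₀ x) (Set.Icc (0:ℝ) 1) :=
    ((continuous_id.sub continuous_const).continuousOn).mul hgc
  have hugc : IntervalIntegrable (fun x => (x - 1/2) * gradE f₀ x) volume 0 1 :=
    huc.intervalIntegrable_of_Icc (by norm_num)
  have hu2int : IntervalIntegrable (fun x : ℝ => (x - 1/2)^2) volume 0 1 :=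
    (((continuous_id.sub continuous_const).pow 2).continuousOn).intervalIntegrable_of_Icc
      (by norm_num)
  have hggc : IntervalIntegrable (fun x => (gradE f₀ x)^2) volume 0 1 :=
    (hgc.pow 2).intervalIntegrable_of_Icc (by norm_num)
  have huu : (∫ x in (0:ℝ)..1, (x - 1/2)^2) = 1/12 := by
    rw [show (fun x : ℝ => (x - 1/2)^2) = fun x : ℝ => (fun y : ℝ => y^2) (x - 1/2) from rfl]
    rw [intervalIntegral.integral_comp_sub_right (fun y : ℝ => y^2) (1/2),
      integral_pow]
    norm_num
  -- the quadratic expansion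
  have hexp : (∫ x in (0:ℝ)..1, (gradE f₀ x - 12*c*(x - 1/2))^2)
      = G - 12*c*c := by
    have heqf : (fun x => (gradE f₀ x - 12*c*(x - 1/2))^2)
        = fun x => (gradE f₀ x)^2 - (24*c) * ((x - 1/2) * gradE f₀ x)
          + (144*c*c) * (x - 1/2)^2 := by
      funext x; ring
    rw [heqf, intervalIntegral.integral_add (hggc.sub (hugc.const_mul _))
        (hu2int.const_mul _),
      intervalIntegral.integral_sub hggc (hugc.const_mul _),
      intervalIntegral.integral_const_mul, intervalIntegral.integral_const_mul, huu]
    rw [← hc, ← hG]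
    ring
  -- strict positivity of the quadratic
  have hQ : 0 < ∫ x in (0:ℝ)..1, (gradE f₀ x - 12*c*(x - 1/2))^2 := by
    rcases (intervalIntegral.integral_nonneg (by norm_num : (0:ℝ) ≤ 1)
      (fun u _ => sq_nonneg (gradE f₀ u - 12*c*(u - 1/2)))).lt_or_eq with h | h
    · exact h
    exfalso
    have hhc : ContinuousOn (fun x => gradE f₀ x - 12*c*(x - 1/2)) (Set.Icc (0:ℝ) 1) :=
      hgc.sub (by fun_prop)
    have hhint : IntervalIntegrable (fun x => (gradE f₀ x - 12*c*(x - 1/2))^2) volume 0 1 :=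
      (hhc.pow 2).intervalIntegrable_of_Icc (by norm_num)
    have hae : (fun x => (gradE f₀ x - 12*c*(x - 1/2))^2)
        =ᵐ[volume.restrict (Set.Ioc (0:ℝ) 1)] 0 := by
      refine (intervalIntegral.integral_eq_zero_iff_of_le_of_nonneg_ae (by norm_num)
        (Eventually.of_forall fun x => sq_nonneg _) hhint).1 h.symm
    rw [Measure.restrict_congr_set Ioc_ae_eq_Icc] at hae
    have heqOn := Measure.eqOn_Icc_of_ae_eq volume (by norm_num : (0:ℝ) ≠ 1) hae
      (hhc.pow 2) continuousOn_const
    have hzero : ∀ x ∈ Set.Icc (0:ℝ) 1, gradE f₀ x = 12*c*(x - 1/2) := by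
      intro x hx
      have := heqOn hx
      simp only [Pi.zero_apply, pow_eq_zero_iff, sub_eq_zero] at this
      nlinarith [this]
    -- deduce S = 6c
    have hg0 : gradE f₀ 0 = -S := by
      unfold gradE; rw [intervalIntegral.integral_same, ← hS]; ring
    have hSc : S = 6*c := by
      have := hzero 0 h01
      rw [hg0] at this
      linarith
    have hFlin : ∀ b ∈ Set.Icc (0:ℝ) 1, (∫ y in (0:ℝ)..b, f₀ y) = (6*c) * b := by
      intro b hb
      have h1 := hgrad b hb
      have h2 := hzero b hb
      rw [hFdef] at h1
      simp only at h1
      rw [h2] at h1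
      rw [hSc] at h1
      linarith
    exact hnc ⟨6*c, ae_const_of_primitive f₀ hfi (6*c) hFlin⟩
  rw [hexp] at hQ
  constructor
  · -- payoff
    have hpay : payoff (Aop f₀) f₀ = G - 12*c*c := by
      unfold payoff Aop
      rw [hheav]
      have heqf : (fun x => (gradE f₀ x - 12 * 1 * (x - 1/2) *
          ∫ y in (0:ℝ)..1, (y - 1/2) * gradE f₀ y) * gradE f₀ x)
          = fun x => (gradE f₀ x)^2 - (12*c) * ((x - 1/2) * gradE f₀ x) := by
        funext x; rw [← hc]; ring
      rw [heqf, intervalIntegral.integral_sub hggc (hugc.const_mul _),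
        intervalIntegral.integral_const_mul]
      try rw [← hc, ← hG]
      try ring
    rw [hpay]; linarith
  · rw [huu]
    nlinarith [hQ]
end

section
/- Let L be the (n+1)×(n+1) skew-symmetric matrix with −1 above and 1 below the diagonal. Its characteristic polynomial is det(L − λI) = Σ_{k=0}^{(n+1)/2} C(n+1, 2k) λ^{2k} when n+1 is even, and det(L − λI) = −λ Σ_{k=0}^{n/2} C(n+1, 2k+1) λ^{2k} when n+1 is odd. -/
open Finset

/-- The skew-symmetric matrix with `−1` above and `1` below the diagonal. -/
def Lmat (n : ℕ) : Matrix (Fin (n+1)) (Fin (n+1)) ℝ :=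
  Matrix.of fun i j => if i < j then -1 else if j < i then 1 else 0

open Matrix

lemma key_ne (n : ℕ) (lam : ℝ) (hlam : lam ≠ 1) :
    (Lmat n - lam • (1 : Matrix (Fin (n+1)) (Fin (n+1)) ℝ)).det
      = ((1-lam)^(n+1) + (-(1+lam))^(n+1))/2 := by
  have h1 : (1:ℝ) - lam ≠ 0 := sub_ne_zero.mpr (Ne.symm hlam)
  have h1' : lam - 1 ≠ 0 := sub_ne_zero.mpr hlam
  obtain ⟨r, hrdef⟩ : ∃ r:ℝ, r = (lam+1)/(lam-1) := ⟨_, rfl⟩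
  have hr : r ≠ 1 := by
    intro h
    rw [hrdef] at h
    rw [div_eq_one_iff_eq h1'] at h
    linarith
  have hr1 : r - 1 = 2/(lam-1) := by
    rw [hrdef]; field_simp; ring
  have h2 : r - 1 ≠ 0 := by rw [hr1]; positivity
  have hr2 : (r - 1) * (lam - 1) = 2 := by rw [hr1]; field_simp
  set x : Fin (n+1) → ℝ := fun i => r^(i:ℕ)/(1-lam) with hxdef
  set A : Matrix (Fin (n+1)) (Fin (n+1)) ℝ :=
    Matrix.of (fun i j => if (j:ℕ) < (i:ℕ) then 2 else if (i:ℕ) = (j:ℕ) then 1 - lam else 0) with hAdef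
  have hx : ∀ i : Fin (n+1), (∑ k, A i k * x k) = 1 := by
    intro i
    have h0 : (∑ k, A i k * x k)
        = ∑ k ∈ range (n+1), (if k < (i:ℕ) then 2 else if (i:ℕ) = k then 1 - lam else 0) * (r^k/(1-lam)) := by
      rw [← Fin.sum_univ_eq_sum_range]
      rfl
    have hsub : ∑ k ∈ range (n+1), (if k < (i:ℕ) then (2:ℝ) else if (i:ℕ) = k then 1 - lam else 0) * (r^k/(1-lam))
        = ∑ k ∈ range ((i:ℕ)+1), (if k < (i:ℕ) then (2:ℝ) else if (i:ℕ) = k then 1 - lam else 0) * (r^k/(1-lam)) := by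
      refine (Finset.sum_subset (Finset.range_subset_range.mpr (by omega)) ?_).symm
      intro k hk hk'
      simp only [Finset.mem_range] at hk hk'
      rw [if_neg (by omega), if_neg (by omega), zero_mul]
    rw [h0, hsub, Finset.sum_range_succ, if_neg (by omega), if_pos rfl]
    have hs : ∑ k ∈ range (i:ℕ), (if k < (i:ℕ) then (2:ℝ) else if (i:ℕ) = k then 1 - lam else 0) * (r^k/(1-lam))
        = 2/(1-lam) * ∑ k ∈ range (i:ℕ), r^k := by
      rw [Finset.mul_sum]
      apply Finset.sum_congr rfl
      intro k hk
      rw [if_pos (Finset.mem_range.mp hk)]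
      ring
    rw [hs, geom_sum_eq hr]
    field_simp
    linear_combination (1 - r ^ (i:ℕ)) * hr2
  have hM : Lmat n - lam • (1 : Matrix (Fin (n+1)) (Fin (n+1)) ℝ)
      = A * (1 + Matrix.replicateCol Unit (-x) * Matrix.replicateRow Unit (fun _ => (1:ℝ))) := by
    ext i j
    rw [Matrix.mul_apply]
    simp only [Matrix.add_apply, Matrix.mul_apply, Matrix.replicateCol_apply, Matrix.replicateRow_apply,
      Matrix.one_apply, Finset.univ_unique, Finset.sum_singleton, Pi.neg_apply,
      mul_add, mul_ite, mul_one, mul_zero, mul_neg]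
    rw [Finset.sum_add_distrib, Finset.sum_ite_eq' Finset.univ j (fun k => A i k)]
    rw [show (∑ k, -(A i k * x k)) = -∑ k, A i k * x k from by rw [Finset.sum_neg_distrib], hx i]
    simp only [Finset.mem_univ, if_true]
    simp only [Matrix.sub_apply, Matrix.smul_apply, Lmat, hAdef, Matrix.of_apply, smul_eq_mul]
    rcases lt_trichotomy i j with h|h|h
    · have hij : (i:ℕ) < (j:ℕ) := h
      rw [if_pos h, Matrix.one_apply_ne (ne_of_lt h), if_neg (by omega), if_neg (by omega)]
      ring
    · subst h
      rw [if_neg (lt_irrefl i), if_neg (lt_irrefl i), Matrix.one_apply_eq,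
        if_neg (lt_irrefl (i:ℕ)), if_pos rfl]
      ring
    · have hij : (j:ℕ) < (i:ℕ) := h
      rw [if_neg (asymm h), if_pos h, Matrix.one_apply_ne (ne_of_lt h).symm, if_pos hij]
      ring
  rw [hM, Matrix.det_mul, Matrix.det_one_add_replicateCol_mul_replicateRow]
  have htri : A.BlockTriangular OrderDual.toDual := by
    intro i j hij
    have h' : (i:ℕ) < (j:ℕ) := hij
    rw [hAdef, Matrix.of_apply, if_neg (by omega), if_neg (by omega)]
  have hdA : A.det = (1-lam)^(n+1) := by
    rw [Matrix.det_of_lowerTriangular A htri, hAdef]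
    simp
  have hdot : (fun _ : Fin (n+1) => (1:ℝ)) ⬝ᵥ (-x) = -((r^(n+1) - 1)/((r-1)*(1-lam))) := by
    simp only [dotProduct, Pi.neg_apply, one_mul, hxdef]
    rw [Finset.sum_neg_distrib]
    congr 1
    rw [Fin.sum_univ_eq_sum_range (fun k => r^k/(1-lam)) (n+1)]
    rw [← Finset.sum_div, geom_sum_eq hr]
    field_simp
  rw [hdA, hdot]
  have hmul : (1-lam) * r = -(1+lam) := by
    rw [hrdef]; field_simp; ring
  have hpow : (-(1+lam))^(n+1) = (1-lam)^(n+1) * r^(n+1) := by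
    rw [← mul_pow, hmul]
  rw [hpow]
  have hD : (r-1)*(1-lam) = -2 := by linear_combination -hr2
  rw [hD]
  ring


lemma key (n : ℕ) (lam : ℝ) :
    (Lmat n - lam • (1 : Matrix (Fin (n+1)) (Fin (n+1)) ℝ)).det
      = ((1-lam)^(n+1) + (-(1+lam))^(n+1))/2 := by
  have hc1 : Continuous fun t : ℝ => (Lmat n - t • (1 : Matrix (Fin (n+1)) (Fin (n+1)) ℝ)).det :=
    Continuous.matrix_det (continuous_const.sub (continuous_id.smul continuous_const))
  have hc2 : Continuous fun t : ℝ => ((1-t)^(n+1) + (-(1+t))^(n+1))/2 := by fun_prop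
  have hd : Dense ({(1:ℝ)}ᶜ) := dense_compl_singleton 1
  have heq := Continuous.ext_on hd hc1 hc2 (fun t ht => key_ne n t (by simpa using ht))
  exact congrFun heq lam

lemma even_extract (f : ℕ → ℝ) (m : ℕ) :
    ∑ k ∈ range m, (if Even k then f k else 0) = ∑ j ∈ range ((m+1)/2), f (2*j) := by
  induction m with
  | zero => simp
  | succ m ih =>
    rw [Finset.sum_range_succ, ih]
    rcases Nat.even_or_odd m with h|h
    · obtain ⟨t, ht⟩ := h
      rw [if_pos ⟨t, ht⟩, show (m+1+1)/2 = (m+1)/2 + 1 by omega, Finset.sum_range_succ,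
        show 2*((m+1)/2) = m by omega]
    · obtain ⟨t, ht⟩ := h
      rw [if_neg (Nat.not_even_iff_odd.mpr ⟨t, ht⟩),
        show (m+1+1)/2 = (m+1)/2 by omega, add_zero]

lemma odd_extract (f : ℕ → ℝ) (m : ℕ) :
    ∑ k ∈ range m, (if Odd k then f k else 0) = ∑ j ∈ range (m/2), f (2*j+1) := by
  induction m with
  | zero => simp
  | succ m ih =>
    rw [Finset.sum_range_succ, ih]
    rcases Nat.even_or_odd m with h|h
    · obtain ⟨t, ht⟩ := h
      rw [if_neg (Nat.not_odd_iff_even.mpr ⟨t, ht⟩),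
        show (m+1)/2 = m/2 by omega, add_zero]
    · obtain ⟨t, ht⟩ := h
      rw [if_pos ⟨t, ht⟩, show (m+1)/2 = m/2 + 1 by omega, Finset.sum_range_succ,
        show 2*(m/2)+1 = m by omega]


/-- The characteristic polynomial of `L`:
`det(L − λI) = Σ_{k} C(n+1, 2k) λ^{2k}` if `n+1` is even, and
`det(L − λI) = −λ Σ_{k} C(n+1, 2k+1) λ^{2k}` if `n+1` is odd. -/
theorem stmt16 (n : ℕ) (lam : ℝ) :
    (Even (n + 1) →
      (Lmat n - lam • (1 : Matrix (Fin (n+1)) (Fin (n+1)) ℝ)).det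
        = ∑ k ∈ range ((n+1)/2 + 1), ((n+1).choose (2*k) : ℝ) * lam ^ (2*k)) ∧
    (Odd (n + 1) →
      (Lmat n - lam • (1 : Matrix (Fin (n+1)) (Fin (n+1)) ℝ)).det
        = -lam * ∑ k ∈ range (n/2 + 1),
            ((n+1).choose (2*k+1) : ℝ) * lam ^ (2*k)) := by
  have hplus : (1+lam)^(n+1) = ∑ k ∈ range (n+2), ((n+1).choose k : ℝ) * lam^k := by
    rw [add_comm (1:ℝ) lam, add_pow]
    exact Finset.sum_congr rfl fun k _ => by rw [one_pow]; ring
  have hminus : (1-lam)^(n+1) = ∑ k ∈ range (n+2), (-1:ℝ)^k * ((n+1).choose k : ℝ) * lam^k := by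
    rw [show (1:ℝ)-lam = -lam + 1 by ring, add_pow]
    exact Finset.sum_congr rfl fun k _ => by rw [one_pow, neg_pow]; ring
  constructor
  · intro hev
    rw [key, Even.neg_pow hev, hplus, hminus, ← Finset.sum_add_distrib]
    have hco : ∀ k ∈ range (n+2),
        ((-1:ℝ)^k * ((n+1).choose k : ℝ) * lam^k + ((n+1).choose k : ℝ)*lam^k)
        = if Even k then 2*(((n+1).choose k : ℝ) * lam^k) else 0 := by
      intro k _
      rcases Nat.even_or_odd k with h|h
      · rw [if_pos h, h.neg_one_pow]; ring
      · rw [if_neg (Nat.not_even_iff_odd.mpr h), h.neg_one_pow]; ring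
    rw [Finset.sum_congr rfl hco,
      even_extract (fun k => 2*(((n+1).choose k:ℝ) * lam^k)) (n+2)]
    obtain ⟨t, ht⟩ := hev
    rw [show (n+2+1)/2 = (n+1)/2 + 1 by omega, ← Finset.mul_sum]
    ring
  · intro hod
    rw [key, Odd.neg_pow hod, hplus, hminus, ← Finset.sum_neg_distrib,
      ← Finset.sum_add_distrib]
    have hco : ∀ k ∈ range (n+2),
        ((-1:ℝ)^k * ((n+1).choose k : ℝ) * lam^k + -(((n+1).choose k : ℝ)*lam^k))
        = if Odd k then -2*(((n+1).choose k : ℝ) * lam^k) else 0 := by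
      intro k _
      rcases Nat.even_or_odd k with h|h
      · rw [if_neg (Nat.not_odd_iff_even.mpr h), h.neg_one_pow]; ring
      · rw [if_pos h, h.neg_one_pow]; ring
    rw [Finset.sum_congr rfl hco,
      odd_extract (fun k => -2*(((n+1).choose k:ℝ) * lam^k)) (n+2)]
    obtain ⟨t, ht⟩ := hod
    rw [show (n+2)/2 = n/2 + 1 by omega, Finset.mul_sum, Finset.sum_div]
    exact Finset.sum_congr rfl fun j _ => by ring
end
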